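/- Let f be positive and twice continuously differentiable on an open interval I ⊆ (0,∞) and suppose f satisfies the profile equation (SSODE) on I. Define X(ξ) = (m/α) ξ^{−2} f(ξ)^{m−1}, Y(ξ) = (m/α) ξ^{−1} f(ξ)^{m−2} f'(ξ), Z(ξ) = (m/α²) ξ^{σ−2} f(ξ)^{m+p−2}. Then for every ξ ∈ I: (m f(ξ)^{m−1}/(α ξ)) X'(ξ) = X(ξ)((m−1)Y(ξ) − 2X(ξ)); (m f(ξ)^{m−1}/(α ξ)) Y'(ξ) = −Y(ξ)² − (β/α)Y(ξ) + X(ξ) − N X(ξ)Y(ξ) − Z(ξ); and (m f(ξ)^{m−1}/(α ξ)) Z'(ξ) = Z(ξ)((m+p−2)Y(ξ) + (σ−2)X(ξ)). In other words, in the rescaled time η with dη/dξ = (α/m) ξ f(ξ)^{1−m}, the triple (X,Y,Z) solves the autonomous system (PSsyst1). -/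

import Mathlib

open Real Filter Set Topology

noncomputable def alphaC (m p σ : ℝ) : ℝ := (σ + 2) / (σ * (m - 1) + 2 * (p - 1))

noncomputable def betaC (m p σ : ℝ) : ℝ := (m - p) / (σ * (m - 1) + 2 * (p - 1))

/-- The self-similar profile ODE (SSODE) at the point `ξ`. -/
def SSODE (N : ℕ) (m p σ : ℝ) (f : ℝ → ℝ) (ξ : ℝ) : Prop :=
  deriv (deriv fun x => f x ^ m) ξ + ((N : ℝ) - 1) / ξ * deriv (fun x => f x ^ m) ξ
    - alphaC m p σ * f ξ + betaC m p σ * ξ * deriv f ξ + ξ ^ σ * f ξ ^ p = 0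

set_option maxHeartbeats 1000000 in
theorem phase_space_variables_solve_system (m p σ : ℝ) (N : ℕ) (hm : 1 < m) (hp0 : 0 < p) (hp1 : p < 1)
    (hσ : 2 * (1 - p) / (m - 1) < σ) (hN : 1 ≤ N)
    (a b : ℝ) (ha : 0 ≤ a)
    (f : ℝ → ℝ) (hfpos : ∀ ξ ∈ Ioo a b, 0 < f ξ)
    (hf : ContDiffOn ℝ 2 f (Ioo a b))
    (hode : ∀ ξ ∈ Ioo a b, SSODE N m p σ f ξ)
    (X Y Z : ℝ → ℝ)
    (hX : ∀ ξ : ℝ, X ξ = m / alphaC m p σ * (f ξ ^ (m - 1) / ξ ^ 2))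
    (hY : ∀ ξ : ℝ, Y ξ = m / alphaC m p σ * (f ξ ^ (m - 2) * deriv f ξ / ξ))
    (hZ : ∀ ξ : ℝ, Z ξ = m / alphaC m p σ ^ 2 * (ξ ^ (σ - 2) * f ξ ^ (m + p - 2))) :
    ∀ ξ ∈ Ioo a b,
      m * f ξ ^ (m - 1) / (alphaC m p σ * ξ) * deriv X ξ
          = X ξ * ((m - 1) * Y ξ - 2 * X ξ) ∧
      m * f ξ ^ (m - 1) / (alphaC m p σ * ξ) * deriv Y ξ
          = -(Y ξ) ^ 2 - betaC m p σ / alphaC m p σ * Y ξ + X ξ - (N : ℝ) * X ξ * Y ξ - Z ξ ∧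
      m * f ξ ^ (m - 1) / (alphaC m p σ * ξ) * deriv Z ξ
          = Z ξ * ((m + p - 2) * Y ξ + (σ - 2) * X ξ) := by
  have hm1 : (0:ℝ) < m - 1 := by linarith
  have hL : 0 < σ * (m - 1) + 2 * (p - 1) := by
    have h := (div_lt_iff₀ hm1).mp hσ
    nlinarith
  have hσ0 : 0 < σ := by
    have h2 : 0 < 2 * (1 - p) / (m - 1) := div_pos (by linarith) hm1
    linarith
  have hA : 0 < alphaC m p σ := div_pos (by linarith) hL
  have hXf : X = fun x => m / alphaC m p σ * (f x ^ (m - 1) / x ^ 2) := funext hX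
  have hYf : Y = fun x => m / alphaC m p σ * (f x ^ (m - 2) * deriv f x / x) := funext hY
  have hZf : Z = fun x => m / alphaC m p σ ^ 2 * (x ^ (σ - 2) * f x ^ (m + p - 2)) := funext hZ
  subst hXf hYf hZf
  intro ξ hξ
  obtain ⟨hξa, hξb⟩ := hξ
  have hmem : ξ ∈ Ioo a b := ⟨hξa, hξb⟩
  have hξ0 : 0 < ξ := lt_of_le_of_lt ha hξa
  have hF : 0 < f ξ := hfpos ξ hmem
  have hFne : f ξ ≠ 0 := ne_of_gt hF
  have hdf : ∀ x ∈ Ioo a b, HasDerivAt f (deriv f x) x := fun x hx =>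
    ((hf.differentiableOn (by norm_num)).differentiableAt (isOpen_Ioo.mem_nhds hx)).hasDerivAt
  have hfd : HasDerivAt f (deriv f ξ) ξ := hdf ξ hmem
  have hf2 : ContDiffOn ℝ 1 (deriv f) (Ioo a b) :=
    hf.deriv_of_isOpen isOpen_Ioo (by norm_num)
  have hfd2 : HasDerivAt (deriv f) (deriv (deriv f) ξ) ξ :=
    ((hf2.differentiableOn (by norm_num)).differentiableAt (isOpen_Ioo.mem_nhds hmem)).hasDerivAt
  -- first derivative of f^m
  have hd1 : ∀ x ∈ Ioo a b, deriv (fun y => f y ^ m) x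
      = deriv f x * m * f x ^ (m - 1) := fun x hx =>
    ((hdf x hx).rpow_const (Or.inl (hfpos x hx).ne')).deriv
  have hev : deriv (fun y => f y ^ m) =ᶠ[𝓝 ξ] fun x => deriv f x * m * f x ^ (m - 1) := by
    filter_upwards [isOpen_Ioo.mem_nhds hmem] with x hx using hd1 x hx
  have hd2 : deriv (deriv fun x => f x ^ m) ξ
      = deriv (deriv f) ξ * m * f ξ ^ (m - 1)
        + deriv f ξ * m * (deriv f ξ * (m - 1) * f ξ ^ (m - 1 - 1)) := by
    rw [hev.deriv_eq]
    exact ((hfd2.mul_const m).mul (hfd.rpow_const (p := m - 1) (Or.inl hFne))).deriv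
  -- derivatives of X, Y, Z
  have hx2 : HasDerivAt (fun x : ℝ => x ^ 2) (2 * ξ) ξ := by
    simpa using hasDerivAt_pow 2 ξ
  have hxne2 : (ξ : ℝ) ^ 2 ≠ 0 := by positivity
  have hXd : deriv (fun x => m / alphaC m p σ * (f x ^ (m - 1) / x ^ 2)) ξ
      = m / alphaC m p σ * ((deriv f ξ * (m - 1) * f ξ ^ (m - 1 - 1) * ξ ^ 2
          - f ξ ^ (m - 1) * (2 * ξ)) / (ξ ^ 2) ^ 2) :=
    (((hfd.rpow_const (p := m - 1) (Or.inl hFne)).div hx2 hxne2).const_mul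
    (m / alphaC m p σ)).deriv
  have hYd : deriv (fun x => m / alphaC m p σ * (f x ^ (m - 2) * deriv f x / x)) ξ
      = m / alphaC m p σ * (((deriv f ξ * (m - 2) * f ξ ^ (m - 2 - 1) * deriv f ξ
          + f ξ ^ (m - 2) * deriv (deriv f) ξ) * ξ - f ξ ^ (m - 2) * deriv f ξ * 1) / ξ ^ 2) :=
    ((((hfd.rpow_const (p := m - 2) (Or.inl hFne)).mul hfd2).div (hasDerivAt_id ξ)
      hξ0.ne').const_mul (m / alphaC m p σ)).deriv
  have hxr : HasDerivAt (fun x : ℝ => x ^ (σ - 2)) ((σ - 2) * ξ ^ (σ - 2 - 1)) ξ :=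
    Real.hasDerivAt_rpow_const (Or.inl hξ0.ne')
  have hZd : deriv (fun x => m / alphaC m p σ ^ 2 * (x ^ (σ - 2) * f x ^ (m + p - 2))) ξ
      = m / alphaC m p σ ^ 2 * ((σ - 2) * ξ ^ (σ - 2 - 1) * f ξ ^ (m + p - 2)
          + ξ ^ (σ - 2) * (deriv f ξ * (m + p - 2) * f ξ ^ (m + p - 2 - 1))) :=
    ((hxr.mul (hfd.rpow_const (p := m + p - 2) (Or.inl hFne))).const_mul
    (m / alphaC m p σ ^ 2)).deriv
  -- rpow conversions
  have hps : ∀ s : ℝ, f ξ ^ (s + 1) = f ξ ^ s * f ξ := fun s => by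
    rw [Real.rpow_add hF, Real.rpow_one]
  have hxs : ∀ s : ℝ, ξ ^ (s + 1) = ξ ^ s * ξ := fun s => by
    rw [Real.rpow_add hξ0, Real.rpow_one]
  have eF1 : f ξ ^ (m - 1) = f ξ ^ (m - 3) * f ξ * f ξ := by
    rw [show m - 1 = m - 3 + 1 + 1 by ring, hps, hps]
  have eF11 : f ξ ^ (m - 1 - 1) = f ξ ^ (m - 3) * f ξ := by
    rw [show m - 1 - 1 = m - 3 + 1 by ring, hps]
  have eF2 : f ξ ^ (m - 2) = f ξ ^ (m - 3) * f ξ := by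
    rw [show m - 2 = m - 3 + 1 by ring, hps]
  have eF21 : f ξ ^ (m - 2 - 1) = f ξ ^ (m - 3) := by rw [show m - 2 - 1 = m - 3 by ring]
  have eFmp : f ξ ^ (m + p - 2) = f ξ ^ (m - 3) * f ξ ^ p * f ξ := by
    rw [show m + p - 2 = m - 3 + p + 1 by ring, hps, Real.rpow_add hF]
  have eFmp1 : f ξ ^ (m + p - 2 - 1) = f ξ ^ (m - 3) * f ξ ^ p := by
    rw [show m + p - 2 - 1 = m - 3 + p by ring, Real.rpow_add hF]
  have ex2 : ξ ^ (σ - 2) = ξ ^ (σ - 4) * ξ * ξ := by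
    rw [show σ - 2 = σ - 4 + 1 + 1 by ring, hxs, hxs]
  have ex21 : ξ ^ (σ - 2 - 1) = ξ ^ (σ - 4) * ξ := by
    rw [show σ - 2 - 1 = σ - 4 + 1 by ring, hxs]
  have exσ : ξ ^ σ = ξ ^ (σ - 4) * ξ ^ (4:ℕ) := by
    rw [← Real.rpow_natCast ξ 4, ← Real.rpow_add hξ0]; norm_num
  -- the ODE in polynomial form
  have hODE := hode ξ hmem
  unfold SSODE at hODE
  rw [hd2, hd1 ξ hmem, eF1, eF11, exσ] at hODE
  have hP : (deriv (deriv f) ξ * m * (f ξ ^ (m - 3) * f ξ * f ξ)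
        + deriv f ξ * m * (deriv f ξ * (m - 1) * (f ξ ^ (m - 3) * f ξ))) * ξ
      + ((N : ℝ) - 1) * (deriv f ξ * m * (f ξ ^ (m - 3) * f ξ * f ξ))
      - alphaC m p σ * f ξ * ξ + betaC m p σ * ξ * deriv f ξ * ξ
      + ξ ^ (σ - 4) * ξ ^ (4:ℕ) * f ξ ^ p * ξ = 0 := by
    field_simp at hODE
    linear_combination hODE
  refine ⟨?_, ?_, ?_⟩
  · simp only [hXd, eF1, eF11, eF2]
    field_simp
  · simp only [hYd, eF1, eF2, eF21, eFmp, ex2]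
    field_simp
    linear_combination hP
  · simp only [hZd, eF1, eF2, eFmp, eFmp1, ex2, ex21]
    field_simp
    ring
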